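/- Suppose Z > 0, R : X → ℝ_{≥0}, and the triple (P_F, P_B, Z) satisfies trajectory balance for R. Then for every x ∈ X, the terminating probability satisfies P_T(x) = R(x)/Z; consequently Z = Σ_{x∈X} R(x) and P_T(x) is proportional to R(x). -/

import Mathlib

open scoped BigOperators Classical

/-- The GFlowNet state space `S = {0,1,⊘}^D`: functions from `Fin D` to `Option Bool`,
with `none` denoting the unspecified entry `⊘`. -/
abbrev GState (D : ℕ) := Fin D → Option Bool

/-- The initial state `s₀`, with all entries `⊘`. -/
def initState (D : ℕ) : GState D := fun _ => none

/-- `s'` is a child of `s` (edge `s → s'` of the DAG `G`): `s'` is obtained from `s`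
by changing exactly one `⊘`-entry of `s` to `0` or `1`. -/
def IsChild {D : ℕ} (s s' : GState D) : Prop :=
  ∃ (i : Fin D) (b : Bool), s i = none ∧ s' = Function.update s i (some b)

/-- Terminal states: no `⊘`-entry. -/
def IsTerminal {D : ℕ} (s : GState D) : Prop := ∀ i, s i ≠ none

/-- The embedding of `X = {0,1}^D` as the set of terminal states. -/
def ofX {D : ℕ} (x : Fin D → Bool) : GState D := fun i => some (x i)

/-- `|s|`: the number of non-`⊘` entries of `s`. -/
def numAssigned {D : ℕ} (s : GState D) : ℕ :=
  (Finset.univ.filter fun i => s i ≠ none).card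

/-- A complete trajectory `τ = (t₀ → t₁ → ⋯ → t_n)`, encoded as the list of its states:
it starts at `s₀`, each consecutive pair is an edge of `G`, and it ends at a terminal state. -/
def IsCompleteTraj {D : ℕ} (l : List (GState D)) : Prop :=
  l.head? = some (initState D) ∧ l.Chain' IsChild ∧
    ∃ s, l.getLast? = some s ∧ IsTerminal s

/-- The trajectory `l` ends at the terminal state corresponding to `x ∈ X`. -/
def EndsAt {D : ℕ} (l : List (GState D)) (x : Fin D → Bool) : Prop :=
  l.getLast? = some (ofX x)

/-- `PF` is a forward policy: for every nonterminal `s`, `PF s ·` is a probability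
distribution supported on the children of `s` (`PF s s'` is `P_F(s'|s)`). -/
def IsForwardPolicy {D : ℕ} (PF : GState D → GState D → ℝ) : Prop :=
  ∀ s : GState D, ¬ IsTerminal s →
    (∀ s', 0 ≤ PF s s') ∧ (∀ s', PF s s' ≠ 0 → IsChild s s') ∧
    (∑ s' : GState D, PF s s' = 1)

/-- `PB` is a backward policy: for every noninitial `s'`, `PB s' ·` is a probability
distribution supported on the parents of `s'` (`PB s' s` is `P_B(s|s')`). -/
def IsBackwardPolicy {D : ℕ} (PB : GState D → GState D → ℝ) : Prop :=
  ∀ s' : GState D, s' ≠ initState D →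
    (∀ s, 0 ≤ PB s' s) ∧ (∀ s, PB s' s ≠ 0 → IsChild s s') ∧
    (∑ s : GState D, PB s' s = 1)

/-- `P_F(τ) = ∏_{i<n} P_F(t_{i+1}|t_i)` along a trajectory. -/
def trajPF {D : ℕ} (PF : GState D → GState D → ℝ) (l : List (GState D)) : ℝ :=
  ((l.zip l.tail).map fun p => PF p.1 p.2).prod

/-- `P_B(τ|x) = ∏_{i<n} P_B(t_i|t_{i+1})` along a trajectory. -/
def trajPB {D : ℕ} (PB : GState D → GState D → ℝ) (l : List (GState D)) : ℝ :=
  ((l.zip l.tail).map fun p => PB p.2 p.1).prod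

/-- Trajectory balance for reward `R`: `Z·P_F(τ) = R(x)·P_B(τ|x)` for every complete
trajectory `τ` ending at `x`. -/
def TrajBalance {D : ℕ} (PF PB : GState D → GState D → ℝ) (Z : ℝ)
    (R : (Fin D → Bool) → ℝ) : Prop :=
  ∀ (l : List (GState D)) (x : Fin D → Bool),
    IsCompleteTraj l → EndsAt l x → Z * trajPF PF l = R x * trajPB PB l

/-- The terminating probability `P_T(x)`: the sum of `P_F(τ)` over all complete
trajectories ending at `x`. -/
noncomputable def PT {D : ℕ} (PF : GState D → GState D → ℝ) (x : Fin D → Bool) : ℝ :=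
  ∑ᶠ l ∈ {l : List (GState D) | IsCompleteTraj l ∧ EndsAt l x}, trajPF PF l

/-- A path in `G` from `s` to `t`, encoded as the list of its states. -/
def IsPath {D : ℕ} (l : List (GState D)) (s t : GState D) : Prop :=
  l.Chain' IsChild ∧ l.head? = some s ∧ l.getLast? = some t
/-- The state flow `F(s)`: sum of `F(τ) = Z·P_F(τ)` over complete trajectories through `s`. -/
noncomputable def stateFlow {D : ℕ} (PF : GState D → GState D → ℝ) (Z : ℝ)
    (s : GState D) : ℝ :=
  ∑ᶠ l ∈ {l : List (GState D) | IsCompleteTraj l ∧ s ∈ l}, Z * trajPF PF l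

/-- The edge flow `F(s→s')`: sum of `F(τ) = Z·P_F(τ)` over complete trajectories
containing the edge `s → s'`. -/
noncomputable def edgeFlow {D : ℕ} (PF : GState D → GState D → ℝ) (Z : ℝ)
    (s s' : GState D) : ℝ :=
  ∑ᶠ l ∈ {l : List (GState D) | IsCompleteTraj l ∧ (s, s') ∈ l.zip l.tail}, Z * trajPF PF l

/-- The Shannon entropy `H[P_F(·|s)]` of the forward policy at `s` (natural log,
with `0·log 0 = 0`). -/
noncomputable def stepEntropyF {D : ℕ} (PF : GState D → GState D → ℝ) (s : GState D) : ℝ :=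
  ∑ s' : GState D, Real.negMulLog (PF s s')

/-- The entropy of the flow determined by `P_F`:
`H[P_F] = Σ_τ P_F(τ) · Σ_{i<n} H[P_F(·|t_i)]`. -/
noncomputable def flowEntropy {D : ℕ} (PF : GState D → GState D → ℝ) : ℝ :=
  ∑ᶠ l ∈ {l : List (GState D) | IsCompleteTraj l},
    trajPF PF l * (l.dropLast.map (stepEntropyF PF)).sum

/-- The uniform backward policy `P_B°(s|s') = 1/|s'|` for each parent `s` of `s'`. -/
noncomputable def uniformBackward (D : ℕ) : GState D → GState D → ℝ :=
  fun s' s => if IsChild s s' then 1 / (numAssigned s' : ℝ) else 0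
namespace GFNaux
variable {D : ℕ}


lemma numAssigned_le (s : GState D) : numAssigned s ≤ D := by
  classical
  have := Finset.card_filter_le (Finset.univ : Finset (Fin D)) (fun i => s i ≠ none)
  simpa [numAssigned] using this

lemma child_numAssigned {s s' : GState D} (h : IsChild s s') :
    numAssigned s' = numAssigned s + 1 := by
  obtain ⟨i, b, hi, rfl⟩ := h
  classical
  have hset : (Finset.univ.filter fun j => Function.update s i (some b) j ≠ none)
      = insert i (Finset.univ.filter fun j => s j ≠ none) := by
    ext j
    by_cases hj : j = i
    · subst hj; simp [Function.update_self]
    · simp [Function.update_of_ne hj, hj]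
  rw [numAssigned, hset, Finset.card_insert_of_notMem (by simp [hi]), numAssigned]

lemma terminal_of_numAssigned {s : GState D} (h : numAssigned s = D) : IsTerminal s := by
  classical
  intro i
  have hsub : (Finset.univ.filter fun j => s j ≠ none) = Finset.univ := by
    apply Finset.eq_univ_of_card
    simpa [Finset.card_univ, numAssigned] using h
  have : i ∈ Finset.univ.filter fun j => s j ≠ none := by rw [hsub]; exact Finset.mem_univ i
  simpa using this

lemma initState_of_numAssigned {s : GState D} (h : numAssigned s = 0) : s = initState D := by
  classical
  funext i
  have : (Finset.univ.filter fun j => s j ≠ none) = ∅ := Finset.card_eq_zero.mp h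
  by_contra hc
  have : i ∈ (∅ : Finset (Fin D)) := this ▸ (by simpa [initState] using hc)
  simp at this

lemma terminal_no_child {s s' : GState D} (h : IsTerminal s) : ¬ IsChild s s' := by
  rintro ⟨i, b, hi, -⟩; exact h i hi

lemma terminal_ofX (x : Fin D → Bool) : IsTerminal (ofX x) := by
  intro i; simp [ofX]

lemma ofX_inj {x y : Fin D → Bool} (h : ofX x = ofX y) : x = y := by
  funext i
  have := congrFun h i
  simpa [ofX] using this

/-- Along a chain, numAssigned of the last = numAssigned of the head + (length - 1). -/
lemma chain_count : ∀ (l : List (GState D)) (a b : GState D),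
    l.Chain' IsChild → l.head? = some a → l.getLast? = some b →
    numAssigned a + (l.length - 1) = numAssigned b := by
  intro l
  induction l with
  | nil => intro a b _ ha _; simp at ha
  | cons c t ih =>
    intro a b hch ha hb
    have hac : c = a := by simpa using ha
    subst hac
    cases t with
    | nil =>
      have : c = b := by simpa using hb
      subst this; simp
    | cons d t' =>
      have h1 : IsChild c d := (List.isChain_cons_cons.mp hch).1
      have h2 : (d :: t').Chain' IsChild := (List.isChain_cons_cons.mp hch).2
      have hb' : (d :: t').getLast? = some b := by
        simpa [List.getLast?_cons_cons] using hb
      have := ih d b h2 rfl hb'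
      have hd := child_numAssigned h1
      simp only [List.length_cons] at this ⊢
      omega

lemma chain_length_le {l : List (GState D)} (h : l.Chain' IsChild) : l.length ≤ D + 1 := by
  cases l with
  | nil => simp
  | cons a t =>
    obtain ⟨b, hb⟩ : ∃ b, (a :: t).getLast? = some b := by
      cases hlast : (a :: t).getLast? with
      | none => simp [List.getLast?_eq_none_iff] at hlast
      | some b => exact ⟨b, rfl⟩
    have := chain_count (a :: t) a b h rfl hb
    have := numAssigned_le b
    simp only [List.length_cons] at *
    omega

lemma eq_singleton_of_head_last {l : List (GState D)} {a b : GState D}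
    (h : l.Chain' IsChild) (ha : l.head? = some a) (hb : l.getLast? = some b)
    (hn : numAssigned b ≤ numAssigned a) : l = [a] := by
  have hc := chain_count l a b h ha hb
  have hlen : l.length = 1 := by
    have : l ≠ [] := by intro hl; subst hl; simp at ha
    have : 1 ≤ l.length := List.length_pos_iff.mpr this
    omega
  obtain ⟨c, rfl⟩ := List.length_eq_one_iff.mp hlen
  have : c = a := by simpa using ha
  subst this; rfl

/-- Generic product along adjacent pairs. -/
lemma zip_tail_concat : ∀ (l : List (GState D)) (a b : GState D), l.getLast? = some b →
    ((l ++ [a]).zip (l ++ [a]).tail) = l.zip l.tail ++ [(b, a)] := by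
  intro l
  induction l with
  | nil => intro a b hb; simp at hb
  | cons c t ih =>
    intro a b hb
    cases t with
    | nil =>
      have : c = b := by simpa using hb
      subst this; simp
    | cons d t' =>
      have hb' : (d :: t').getLast? = some b := by
        simpa [List.getLast?_cons_cons] using hb
      have := ih a b hb'
      simp only [List.cons_append, List.zip_cons_cons, List.tail_cons] at this ⊢
      rw [this]


section Policies
variable (PF PB : GState D → GState D → ℝ)

lemma trajPF_singleton (s : GState D) : trajPF PF [s] = 1 := by simp [trajPF]

lemma trajPF_cons (a b : GState D) (t : List (GState D)) :
    trajPF PF (a :: b :: t) = PF a b * trajPF PF (b :: t) := by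
  simp [trajPF]

lemma trajPF_concat {l : List (GState D)} {b : GState D} (hb : l.getLast? = some b)
    (a : GState D) : trajPF PF (l ++ [a]) = trajPF PF l * PF b a := by
  unfold trajPF
  rw [zip_tail_concat l a b hb]
  simp

lemma trajPB_singleton (s : GState D) : trajPB PB [s] = 1 := by simp [trajPB]

lemma trajPB_cons (a b : GState D) (t : List (GState D)) :
    trajPB PB (a :: b :: t) = PB b a * trajPB PB (b :: t) := by
  simp [trajPB]

lemma trajPB_concat {l : List (GState D)} {b : GState D} (hb : l.getLast? = some b)
    (a : GState D) : trajPB PB (l ++ [a]) = trajPB PB l * PB a b := by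
  unfold trajPB
  rw [zip_tail_concat l a b hb]
  simp

/-- Paths from `s` to any terminal state. -/
def FwdSet (s : GState D) : Set (List (GState D)) :=
  {l | l.head? = some s ∧ l.Chain' IsChild ∧ ∃ t, l.getLast? = some t ∧ IsTerminal t}

/-- Paths from the initial state to `s'`. -/
def BwdSet (s' : GState D) : Set (List (GState D)) :=
  {l | IsPath l (initState D) s'}

lemma FwdSet_finite (s : GState D) : (FwdSet s).Finite :=
  (List.finite_length_le (GState D) (D + 1)).subset
    (fun l hl => chain_length_le hl.2.1)

lemma BwdSet_finite (s' : GState D) : (BwdSet s').Finite :=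
  (List.finite_length_le (GState D) (D + 1)).subset
    (fun l hl => chain_length_le hl.1)

lemma FwdSet_terminal {s : GState D} (hs : IsTerminal s) : FwdSet s = {[s]} := by
  ext l
  constructor
  · rintro ⟨hh, hch, t, hl, -⟩
    cases l with
    | nil => simp at hh
    | cons a r =>
      have : a = s := by simpa using hh
      subst this
      cases r with
      | nil => rfl
      | cons b r' =>
        exact absurd (List.isChain_cons_cons.mp hch).1 (terminal_no_child hs)
  · rintro rfl
    exact ⟨rfl, List.isChain_singleton s, s, rfl, hs⟩

lemma BwdSet_init : BwdSet (initState D) = {[initState D]} := by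
  ext l
  constructor
  · rintro ⟨hch, hh, hl⟩
    exact eq_singleton_of_head_last hch hh hl le_rfl
  · rintro rfl
    exact ⟨List.isChain_singleton _, rfl, rfl⟩

end Policies
end GFNaux
namespace GFNaux
variable {D : ℕ}
section Main
variable (PF PB : GState D → GState D → ℝ)

lemma FwdSet_decomp {s : GState D} (hs : ¬ IsTerminal s) :
    FwdSet s = ⋃ s' : GState D,
      (fun l => s :: l) '' (if IsChild s s' then FwdSet s' else ∅) := by
  ext l
  simp only [Set.mem_iUnion, Set.mem_image]
  constructor
  · rintro ⟨hh, hch, t, hl, ht⟩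
    cases l with
    | nil => simp at hh
    | cons a r =>
      have ha : a = s := by simpa using hh
      cases r with
      | nil =>
        have h1 : a = t := by simpa using hl
        exact absurd (show IsTerminal s by rw [← ha, h1]; exact ht) hs
      | cons b r' =>
        refine ⟨b, b :: r', ?_, by rw [ha]⟩
        have h1 := List.isChain_cons_cons.mp hch
        rw [if_pos (ha ▸ h1.1)]
        exact ⟨rfl, h1.2, t, by simpa [List.getLast?_cons_cons] using hl, ht⟩
  · rintro ⟨s', l', hl', rfl⟩
    by_cases hc : IsChild s s'
    · rw [if_pos hc] at hl'
      obtain ⟨hh', hch', t, hlast', ht⟩ := hl'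
      cases l' with
      | nil => simp at hh'
      | cons b r =>
        have hb : b = s' := by simpa using hh'
        subst hb
        exact ⟨rfl, List.isChain_cons_cons.mpr ⟨hc, hch'⟩, t,
          by simpa [List.getLast?_cons_cons] using hlast', ht⟩
    · rw [if_neg hc] at hl'; simp at hl'

lemma fwd_sum (hPF : IsForwardPolicy PF) :
    ∀ (k : ℕ) (s : GState D), D - numAssigned s ≤ k →
      ∑ᶠ l ∈ FwdSet s, trajPF PF l = 1 := by
  intro k
  induction k with
  | zero =>
    intro s hk
    have hterm : IsTerminal s :=
      terminal_of_numAssigned (by have := numAssigned_le s; omega)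
    rw [FwdSet_terminal hterm, finsum_mem_singleton, trajPF_singleton]
  | succ k ih =>
    intro s hk
    by_cases hterm : IsTerminal s
    · rw [FwdSet_terminal hterm, finsum_mem_singleton, trajPF_singleton]
    · obtain ⟨hnn, hsupp, hsum⟩ := hPF s hterm
      rw [FwdSet_decomp hterm, finsum_mem_iUnion ?disj ?fin]
      case fin =>
        intro s'
        split_ifs with hc
        · exact (FwdSet_finite s').image _
        · simp
      case disj =>
        intro s1 s2 hne
        simp only [Function.onFun]
        rw [Set.disjoint_left]
        rintro l ⟨l1, hl1, rfl⟩ ⟨l2, hl2, heq⟩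
        have hl12 : l2 = l1 := by simpa using heq
        subst hl12
        by_cases h1 : IsChild s s1
        case neg => rw [if_neg h1] at hl1; simp at hl1
        by_cases h2 : IsChild s s2
        case neg => rw [if_neg h2] at hl2; simp at hl2
        rw [if_pos h1] at hl1; rw [if_pos h2] at hl2
        exact hne (by rw [← Option.some_inj, ← hl1.1, ← hl2.1])
      have hterm_eq : ∀ s' : GState D,
          (∑ᶠ l ∈ (fun l => s :: l) '' (if IsChild s s' then FwdSet s' else ∅),
            trajPF PF l) = PF s s' := by
        intro s'
        by_cases hc : IsChild s s'
        · rw [if_pos hc,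
            finsum_mem_image (f := trajPF PF) (fun a _ b _ h => by simpa using h)]
          have hcong : ∀ l' ∈ FwdSet s',
              trajPF PF (s :: l') = PF s s' * trajPF PF l' := by
            intro l' hl'
            obtain ⟨hh', -, -⟩ := hl'
            cases l' with
            | nil => simp at hh'
            | cons b r =>
              have hb : b = s' := by simpa using hh'
              rw [hb]
              exact trajPF_cons PF s s' r
          rw [finsum_mem_congr rfl hcong,
            finsum_mem_eq_finite_toFinset_sum _ (FwdSet_finite s'), ← Finset.mul_sum,
            ← finsum_mem_eq_finite_toFinset_sum _ (FwdSet_finite s'),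
            ih s' (by have := child_numAssigned hc; omega), mul_one]
        · rw [if_neg hc]
          have h0 : PF s s' = 0 := by
            by_contra h0; exact hc (hsupp s' h0)
          simp [h0]
      rw [finsum_congr hterm_eq, finsum_eq_sum_of_fintype]
      exact hsum

lemma BwdSet_decomp {s' : GState D} (hs : s' ≠ initState D) :
    BwdSet s' = ⋃ s : GState D,
      (fun l => l ++ [s']) '' (if IsChild s s' then BwdSet s else ∅) := by
  ext l
  simp only [Set.mem_iUnion, Set.mem_image]
  constructor
  · rintro ⟨hch, hh, hl⟩
    have hsplit : l.dropLast ++ [s'] = l := List.dropLast_append_getLast? s' hl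
    have hdne : l.dropLast ≠ [] := by
      intro h
      rw [h, List.nil_append] at hsplit
      rw [← hsplit] at hh
      simp only [List.head?_cons, Option.some_inj] at hh
      exact hs hh
    obtain ⟨s, hlast⟩ : ∃ s, l.dropLast.getLast? = some s := by
      cases h : l.dropLast.getLast? with
      | none => exact absurd (List.getLast?_eq_none_iff.mp h) hdne
      | some s => exact ⟨s, rfl⟩
    have hch' : (l.dropLast ++ [s']).Chain' IsChild := by rw [hsplit]; exact hch
    simp only [List.Chain'] at hch'
    rw [List.isChain_append] at hch'
    have hcs : IsChild s s' := hch'.2.2 s hlast s' rfl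
    refine ⟨s, l.dropLast, ?_, hsplit⟩
    rw [if_pos hcs]
    refine ⟨hch'.1, ?_, hlast⟩
    rw [← List.head?_append_of_ne_nil _ hdne, hsplit]
    exact hh
  · rintro ⟨s, l', hl', rfl⟩
    by_cases hc : IsChild s s'
    · rw [if_pos hc] at hl'
      obtain ⟨hch', hh', hlast'⟩ := hl'
      have hne : l' ≠ [] := by intro h; subst h; simp at hh'
      refine ⟨?_, ?_, by simp⟩
      · rw [List.Chain', List.isChain_append]
        refine ⟨hch', List.isChain_singleton _, ?_⟩
        intro x hx y hy
        rw [hlast'] at hx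
        have hx' : s = x := by simpa using hx
        have hy' : s' = y := by simpa using hy
        rw [← hx', ← hy']; exact hc
      · rw [List.head?_append_of_ne_nil _ hne]; exact hh'
    · rw [if_neg hc] at hl'; simp at hl'

lemma bwd_sum (hPB : IsBackwardPolicy PB) :
    ∀ (k : ℕ) (s' : GState D), numAssigned s' ≤ k →
      ∑ᶠ l ∈ BwdSet s', trajPB PB l = 1 := by
  intro k
  induction k with
  | zero =>
    intro s' hk
    have : s' = initState D := initState_of_numAssigned (by omega)
    subst this
    rw [BwdSet_init, finsum_mem_singleton, trajPB_singleton]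
  | succ k ih =>
    intro s' hk
    by_cases hinit : s' = initState D
    · subst hinit
      rw [BwdSet_init, finsum_mem_singleton, trajPB_singleton]
    · obtain ⟨hnn, hsupp, hsum⟩ := hPB s' hinit
      rw [BwdSet_decomp hinit, finsum_mem_iUnion ?disj ?fin]
      case fin =>
        intro s
        split_ifs with hc
        · exact (BwdSet_finite s).image _
        · simp
      case disj =>
        intro s1 s2 hne
        simp only [Function.onFun]
        rw [Set.disjoint_left]
        rintro l ⟨l1, hl1, rfl⟩ ⟨l2, hl2, heq⟩
        have hl12 : l2 = l1 := by
          have := heq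
          exact List.append_left_injective [s'] this
        subst hl12
        by_cases h1 : IsChild s1 s'
        case neg => rw [if_neg h1] at hl1; simp at hl1
        by_cases h2 : IsChild s2 s'
        case neg => rw [if_neg h2] at hl2; simp at hl2
        rw [if_pos h1] at hl1; rw [if_pos h2] at hl2
        exact hne (by rw [← Option.some_inj, ← hl1.2.2, ← hl2.2.2])
      have hterm_eq : ∀ s : GState D,
          (∑ᶠ l ∈ (fun l => l ++ [s']) '' (if IsChild s s' then BwdSet s else ∅),
            trajPB PB l) = PB s' s := by
        intro s
        by_cases hc : IsChild s s'
        · rw [if_pos hc,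
            finsum_mem_image (f := trajPB PB)
              (fun a _ b _ h => List.append_left_injective [s'] h)]
          have hcong : ∀ l' ∈ BwdSet s,
              trajPB PB (l' ++ [s']) = PB s' s * trajPB PB l' := by
            intro l' hl'
            rw [trajPB_concat PB hl'.2.2 s', mul_comm]
          rw [finsum_mem_congr rfl hcong,
            finsum_mem_eq_finite_toFinset_sum _ (BwdSet_finite s), ← Finset.mul_sum,
            ← finsum_mem_eq_finite_toFinset_sum _ (BwdSet_finite s),
            ih s (by have := child_numAssigned hc; omega), mul_one]
        · rw [if_neg hc]
          have h0 : PB s' s = 0 := by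
            by_contra h0; exact hc (hsupp s h0)
          simp [h0]
      rw [finsum_congr hterm_eq, finsum_eq_sum_of_fintype]
      exact hsum

lemma complete_ends_iff (x : Fin D → Bool) (l : List (GState D)) :
    (IsCompleteTraj l ∧ EndsAt l x) ↔ l ∈ BwdSet (ofX x) := by
  constructor
  · rintro ⟨⟨hh, hch, -⟩, hend⟩
    exact ⟨hch, hh, hend⟩
  · rintro ⟨hch, hh, hl⟩
    exact ⟨⟨hh, hch, ofX x, hl, terminal_ofX x⟩, hl⟩

lemma FwdSet_init_eq :
    FwdSet (initState D) = ⋃ x : Fin D → Bool, BwdSet (ofX x) := by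
  ext l
  simp only [Set.mem_iUnion]
  constructor
  · rintro ⟨hh, hch, t, hl, ht⟩
    refine ⟨fun i => (t i).iget, hch, hh, ?_⟩
    have : ofX (fun i => (t i).iget) = t := by
      funext i
      cases hti : t i with
      | none => exact absurd hti (ht i)
      | some b => simp [ofX, hti]
    rw [this]; exact hl
  · rintro ⟨x, hch, hh, hl⟩
    exact ⟨hh, hch, ofX x, hl, terminal_ofX x⟩

end Main
end GFNaux

/-- If `(P_F, P_B, Z)` with `Z > 0` satisfies trajectory balance for a
nonnegative reward `R`, then `P_T(x) = R(x)/Z` for every `x ∈ X`; consequently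
`Z = Σ_{x∈X} R(x)` (and in particular `P_T ∝ R`). -/
theorem statement2 {D : ℕ} (hD : 1 ≤ D)
    (PF PB : GState D → GState D → ℝ) (Z : ℝ) (hZ : 0 < Z)
    (hPF : IsForwardPolicy PF) (hPB : IsBackwardPolicy PB)
    (R : (Fin D → Bool) → ℝ) (hR : ∀ x, 0 ≤ R x)
    (hTB : TrajBalance PF PB Z R) :
    (∀ x : Fin D → Bool, PT PF x = R x / Z) ∧ Z = ∑ x : Fin D → Bool, R x := by
  classical
  open GFNaux in
  have hset : ∀ x : Fin D → Bool,
      {l : List (GState D) | IsCompleteTraj l ∧ EndsAt l x} = GFNaux.BwdSet (ofX x) := by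
    intro x; ext l; exact GFNaux.complete_ends_iff x l
  have hPT : ∀ x : Fin D → Bool, PT PF x = R x / Z := by
    intro x
    unfold PT
    rw [hset x]
    have hcong : ∀ l ∈ GFNaux.BwdSet (ofX x),
        trajPF PF l = (R x / Z) * trajPB PB l := by
      intro l hl
      obtain ⟨h1, h2⟩ := (GFNaux.complete_ends_iff x l).mpr hl
      have htb := hTB l x h1 h2
      rw [div_mul_eq_mul_div, eq_div_iff hZ.ne']
      linarith
    rw [finsum_mem_congr rfl hcong,
      finsum_mem_eq_finite_toFinset_sum _ (GFNaux.BwdSet_finite _), ← Finset.mul_sum,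
      ← finsum_mem_eq_finite_toFinset_sum _ (GFNaux.BwdSet_finite _),
      GFNaux.bwd_sum PB hPB D (ofX x) (GFNaux.numAssigned_le _), mul_one]
  refine ⟨hPT, ?_⟩
  have h1 : ∑ᶠ l ∈ GFNaux.FwdSet (initState D), trajPF PF l = 1 :=
    GFNaux.fwd_sum PF hPF D (initState D) (by omega)
  rw [GFNaux.FwdSet_init_eq, finsum_mem_iUnion ?disj ?fin] at h1
  case fin => intro x; exact GFNaux.BwdSet_finite _
  case disj =>
    intro x1 x2 hne
    simp only [Function.onFun]
    rw [Set.disjoint_left]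
    rintro l ⟨-, -, hl1⟩ ⟨-, -, hl2⟩
    rw [hl1, Option.some_inj] at hl2
    exact hne (GFNaux.ofX_inj hl2)
  have h2 : ∀ x : Fin D → Bool,
      ∑ᶠ l ∈ GFNaux.BwdSet (ofX x), trajPF PF l = R x / Z := by
    intro x
    rw [← hPT x]
    unfold PT
    rw [hset x]
  rw [finsum_congr h2, finsum_eq_sum_of_fintype, ← Finset.sum_div] at h1
  have hZne : Z ≠ 0 := hZ.ne'
  field_simp at h1
  linarith
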